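/- Let G=(V,E) be a correlation clustering instance, β∈(0,1), 𝒞 any clustering, k∈[n], and U⊆V with |U|=k. Let f^-_2 = Σ_{u∈U} Σ_{uv∈φ^-_2(u)} (1−x_{uv}). Then there exists a vector c^-_2∈ℝ_{≥0}^{V} such that: (a) f^-_2 ≤ Σ_{r∈V} c^-_2(r)·cost_𝒞(r); (b) c^-_2(r) ≤ 2/(1−β) for every r∈V; (c) Σ_{r∈V} c^-_2(r) ≤ 2k/(1−β). -/
import Mathlib


open Finset

attribute [local instance] Classical.propDecidable

noncomputable section

variable {V : Type*}

/-- The neighborhood of `u` in the graph of `+`edges `E` (contains `u` itself,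
since `E` contains all self-loops). -/
def Nbr [Fintype V] (E : V → V → Prop) (u : V) : Finset V :=
  Finset.univ.filter (fun v => E u v)

/-- The degree `d(u) = |N(u)|`. -/
def deg [Fintype V] (E : V → V → Prop) (u : V) : ℕ := (Nbr E u).card

/-- `M_{uv} = max (d(u), d(v))`. -/
def Mdeg [Fintype V] (E : V → V → Prop) (u v : V) : ℕ := max (deg E u) (deg E v)

/-- The pruned edge set `E_H = {uv ∈ E : |N(u) Δ N(v)| ≤ β · M_{uv}}`. -/
def EH [Fintype V] (β : ℝ) (E : V → V → Prop) (u v : V) : Prop :=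
  E u v ∧ ((symmDiff (Nbr E u) (Nbr E v)).card : ℝ) ≤ β * (Mdeg E u v : ℝ)

/-- The neighborhood of `u` in the pruned graph `H`. -/
def NH [Fintype V] (β : ℝ) (E : V → V → Prop) (u : V) : Finset V :=
  Finset.univ.filter (fun v => EH β E u v)

/-- The fractional solution: `x_{uu} = 0` and
`x_{uv} = 1 − |N_H(u) ∩ N_H(v)| / M_{uv}` for `u ≠ v`. -/
def xval [Fintype V] (β : ℝ) (E : V → V → Prop) (u v : V) : ℝ :=
  if u = v then 0 else 1 - ((NH β E u ∩ NH β E v).card : ℝ) / (Mdeg E u v : ℝ)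

/-- `cost_𝒞(u)`: the number of pairs incident to `u` in disagreement with respect
to the clustering `C` (given as a labelling function). -/
def costC [Fintype V] {α : Type*} (E : V → V → Prop) (C : V → α) (u : V) : ℕ :=
  (Finset.univ.filter
    (fun v => (E u v ∧ C u ≠ C v) ∨ (¬ E u v ∧ v ≠ u ∧ C u = C v))).card

/-- The top-`k` norm `cost^k_𝒞` of the disagreement vector of the clustering `C`:
the maximum of `∑_{u ∈ T} cost_𝒞(u)` over subsets `T ⊆ V` of size `k`. -/
def costTopK [Fintype V] {α : Type*} (E : V → V → Prop) (C : V → α) (k : ℕ) : ℕ :=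
  (Finset.powersetCard k (Finset.univ : Finset V)).sup (fun T => ∑ u ∈ T, costC E C u)

/-- `φ^+_1(u)`: (other endpoints of) `+`edges incident to `u` that are cut in `𝒞`. -/
def phi1p [Fintype V] {α : Type*} (E : V → V → Prop) (C : V → α) (u : V) : Finset V :=
  Finset.univ.filter (fun v => E u v ∧ C u ≠ C v)

/-- `φ^+_2(u)`: (other endpoints of) `+`edges of `E ∖ E_H` incident to `u` that are
not cut in `𝒞`. -/
def phi2p [Fintype V] {α : Type*} (β : ℝ) (E : V → V → Prop) (C : V → α) (u : V) :
    Finset V :=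
  Finset.univ.filter (fun v => E u v ∧ ¬ EH β E u v ∧ C u = C v)

/-- `φ^+_3(u)`: (other endpoints of) edges of `E_H` incident to `u` that are not cut
in `𝒞` (this includes the self-loop `uu`). -/
def phi3p [Fintype V] {α : Type*} (β : ℝ) (E : V → V → Prop) (C : V → α) (u : V) :
    Finset V :=
  Finset.univ.filter (fun v => EH β E u v ∧ C u = C v)

/-- `φ^-_1(u)`: (other endpoints of) `−`edges incident to `u` that are not cut in `𝒞`. -/
def phi1m [Fintype V] {α : Type*} (E : V → V → Prop) (C : V → α) (u : V) : Finset V :=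
  Finset.univ.filter (fun v => v ≠ u ∧ ¬ E u v ∧ C u = C v)

/-- `φ^-_2(u)`: (other endpoints of) `−`edges incident to `u` that are cut in `𝒞`. -/
def phi2m [Fintype V] {α : Type*} (E : V → V → Prop) (C : V → α) (u : V) : Finset V :=
  Finset.univ.filter (fun v => v ≠ u ∧ ¬ E u v ∧ C u ≠ C v)

section MyHelpers

variable [Fintype V]

lemma my_mem_Nbr {E : V → V → Prop} {u v : V} : v ∈ Nbr E u ↔ E u v := by
  simp [Nbr]

lemma my_mem_NH {β : ℝ} {E : V → V → Prop} {u v : V} : v ∈ NH β E u ↔ EH β E u v := by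
  simp [NH]

lemma my_NH_subset_Nbr {β : ℝ} {E : V → V → Prop} (u : V) : NH β E u ⊆ Nbr E u :=
  fun v hv => my_mem_Nbr.2 (my_mem_NH.1 hv).1

lemma my_EH_symm {β : ℝ} {E : V → V → Prop} (hsymm : ∀ u v, E u v → E v u)
    {u v : V} (h : EH β E u v) : EH β E v u := by
  refine ⟨hsymm u v h.1, ?_⟩
  have h2 := h.2
  unfold Mdeg at h2 ⊢
  rwa [symmDiff_comm, max_comm] at h2

lemma my_deg_pos {E : V → V → Prop} (hrefl : ∀ u, E u u) (u : V) : 0 < deg E u :=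
  Finset.card_pos.2 ⟨u, my_mem_Nbr.2 (hrefl u)⟩

lemma my_deg_lower {β : ℝ} {E : V → V → Prop} (hβ0 : 0 ≤ β)
    {u v : V} (h : EH β E u v) :
    (1 - β) * (deg E u : ℝ) ≤ (deg E v : ℝ) := by
  rcases le_or_gt (deg E u) (deg E v) with hle | hlt
  · have h1 : (deg E u : ℝ) ≤ (deg E v : ℝ) := by exact_mod_cast hle
    have h0 : (0:ℝ) ≤ (deg E u : ℝ) := Nat.cast_nonneg _
    nlinarith
  · have hM : Mdeg E u v = deg E u := max_eq_left hlt.le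
    have hsub : Nbr E u \ Nbr E v ⊆ symmDiff (Nbr E u) (Nbr E v) := by
      intro x hx
      rw [Finset.mem_symmDiff]
      exact Or.inl ⟨(Finset.mem_sdiff.1 hx).1, (Finset.mem_sdiff.1 hx).2⟩
    have hcard : deg E u ≤ (Nbr E u \ Nbr E v).card + deg E v := by
      calc deg E u ≤ ((Nbr E u) ∪ (Nbr E v)).card :=
            Finset.card_le_card Finset.subset_union_left
        _ = (Nbr E u \ Nbr E v).card + deg E v := (Finset.card_sdiff_add_card _ _).symm
    have hc2 : ((Nbr E u \ Nbr E v).card : ℝ) ≤ β * (deg E u : ℝ) := by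
      have := h.2
      rw [hM] at this
      calc ((Nbr E u \ Nbr E v).card : ℝ)
          ≤ ((symmDiff (Nbr E u) (Nbr E v)).card : ℝ) := by
            exact_mod_cast Finset.card_le_card hsub
        _ ≤ β * (deg E u : ℝ) := this
    have hc1 : (deg E u : ℝ) ≤ ((Nbr E u \ Nbr E v).card : ℝ) + (deg E v : ℝ) := by
      exact_mod_cast hcard
    linarith

end MyHelpers


/-- There is a nonnegative coefficient vector `c^-_2` such that
(a) `f^-_2 ≤ Σ_r c^-_2(r)·cost_𝒞(r)`, (b) `c^-_2(r) ≤ 2/(1−β)` for every `r`, and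
(c) `Σ_r c^-_2(r) ≤ 2k/(1−β)`. -/
theorem exists_coeff_f2m [Fintype V] (E : V → V → Prop)
    (hsymm : ∀ u v, E u v → E v u) (hrefl : ∀ u, E u u)
    (β : ℝ) (hβ0 : 0 < β) (hβ1 : β < 1)
    {α : Type*} (C : V → α)
    (k : ℕ) (hk1 : 1 ≤ k) (hk2 : k ≤ Fintype.card V)
    (U : Finset V) (hU : U.card = k) :
    ∃ c : V → ℝ, (∀ r, 0 ≤ c r) ∧
      (∑ u ∈ U, ∑ v ∈ phi2m E C u, (1 - xval β E u v)
        ≤ ∑ r : V, c r * (costC E C r : ℝ)) ∧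
      (∀ r : V, c r ≤ 2 / (1 - β)) ∧
      (∑ r : V, c r ≤ 2 * (k : ℝ) / (1 - β)) := by
  have hb : (0:ℝ) < 1 - β := by linarith
  have hdpos : ∀ u : V, (0:ℝ) < (deg E u : ℝ) := fun u => by
    exact_mod_cast my_deg_pos hrefl u
  have hbinv : (0:ℝ) ≤ (1 - β)⁻¹ := le_of_lt (inv_pos.2 hb)
  have hMw : ∀ w : V, (0:ℝ) < (1 - β) * (deg E w : ℝ) := fun w => mul_pos hb (hdpos w)
  have hMwinv : ∀ w : V, (0:ℝ) ≤ ((1 - β) * (deg E w : ℝ))⁻¹ :=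
    fun w => le_of_lt (inv_pos.2 (hMw w))
  set cf : V → ℝ := fun w =>
    (if w ∈ U then (1 - β)⁻¹ else 0) +
      ∑ u ∈ U, (if w ∈ NH β E u then ((deg E u : ℝ))⁻¹ else 0) with hcf
  have hcut : ∀ w : V,
      ((Finset.univ.filter (fun v => v ∈ NH β E w ∧ ¬ C v = C w)).card : ℝ)
        ≤ (costC E C w : ℝ) := by
    intro w
    have hsub : (Finset.univ.filter (fun v => v ∈ NH β E w ∧ ¬ C v = C w)) ⊆
        (Finset.univ.filter
          (fun v => (E w v ∧ C w ≠ C v) ∨ (¬ E w v ∧ v ≠ w ∧ C w = C v))) := by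
      intro v hv
      simp only [Finset.mem_filter, Finset.mem_univ, true_and] at hv ⊢
      exact Or.inl ⟨(my_mem_NH.1 hv.1).1, fun h => hv.2 h.symm⟩
    exact_mod_cast Finset.card_le_card hsub
  have hNHsum : ∀ w : V,
      ∑ u ∈ NH β E w, ((deg E u : ℝ))⁻¹ ≤ (1 - β)⁻¹ := by
    intro w
    have h1 : ∑ u ∈ NH β E w, ((deg E u : ℝ))⁻¹
        ≤ ∑ _u ∈ NH β E w, ((1 - β) * (deg E w : ℝ))⁻¹ := by
      refine Finset.sum_le_sum fun u hu => ?_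
      exact inv_anti₀ (mul_pos hb (hdpos w)) (my_deg_lower hβ0.le (my_mem_NH.1 hu))
    have h2 : ∑ _u ∈ NH β E w, ((1 - β) * (deg E w : ℝ))⁻¹
        = ((NH β E w).card : ℝ) * ((1 - β) * (deg E w : ℝ))⁻¹ := by
      rw [Finset.sum_const, nsmul_eq_mul]
    have h3 : ((NH β E w).card : ℝ) ≤ (deg E w : ℝ) := by
      exact_mod_cast Finset.card_le_card (my_NH_subset_Nbr w)
    have h4 : (deg E w : ℝ) * ((1 - β) * (deg E w : ℝ))⁻¹ = (1 - β)⁻¹ := by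
      rw [mul_inv, mul_comm ((1 - β)⁻¹) _, ← mul_assoc,
        mul_inv_cancel₀ (ne_of_gt (hdpos w)), one_mul]
    calc ∑ u ∈ NH β E w, ((deg E u : ℝ))⁻¹
        ≤ ((NH β E w).card : ℝ) * ((1 - β) * (deg E w : ℝ))⁻¹ := by rw [← h2]; exact h1
      _ ≤ (deg E w : ℝ) * ((1 - β) * (deg E w : ℝ))⁻¹ :=
          mul_le_mul_of_nonneg_right h3 (hMwinv w)
      _ = (1 - β)⁻¹ := h4
  have hsum_split : ∀ (A B : V → V → ℝ),
      ∑ v : V, ∑ w : V, (A v w + B v w)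
        = (∑ w : V, ∑ v : V, A v w) + ∑ w : V, ∑ v : V, B v w := by
    intro A B
    rw [Finset.sum_comm]
    rw [← Finset.sum_add_distrib]
    exact Finset.sum_congr rfl fun w _ => Finset.sum_add_distrib
  refine ⟨cf, ?_, ?_, ?_, ?_⟩
  · intro r
    apply add_nonneg
    · split_ifs
      · exact hbinv
      · exact le_rfl
    · refine Finset.sum_nonneg fun u _ => ?_
      split_ifs
      · exact le_of_lt (inv_pos.2 (hdpos u))
      · exact le_rfl
  · -- (a) main inequality
    have key : ∀ u ∈ U, ∑ v ∈ phi2m E C u, (1 - xval β E u v)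
        ≤ (1 - β)⁻¹ * (costC E C u : ℝ)
          + ∑ w ∈ NH β E u, ((deg E u : ℝ))⁻¹ * (costC E C w : ℝ) := by
      intro u _
      have hstep : ∀ v ∈ phi2m E C u, (1 - xval β E u v) =
          ∑ _w ∈ NH β E u ∩ NH β E v, ((Mdeg E u v : ℝ))⁻¹ := by
        intro v hv
        have hvu : ¬ (u = v) := by
          simp only [phi2m, Finset.mem_filter, Finset.mem_univ, true_and] at hv
          exact fun h => hv.1 h.symm
        have hx : (1 : ℝ) - xval β E u v
            = ((NH β E u ∩ NH β E v).card : ℝ) * ((Mdeg E u v : ℝ))⁻¹ := by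
          simp only [xval, if_neg hvu]
          ring
        rw [hx, Finset.sum_const, nsmul_eq_mul]
      calc ∑ v ∈ phi2m E C u, (1 - xval β E u v)
          = ∑ v ∈ phi2m E C u, ∑ _w ∈ NH β E u ∩ NH β E v, ((Mdeg E u v : ℝ))⁻¹ :=
            Finset.sum_congr rfl hstep
        _ = ∑ v : V, ∑ w : V,
              (if v ∈ phi2m E C u ∧ w ∈ NH β E u ∩ NH β E v
                then ((Mdeg E u v : ℝ))⁻¹ else 0) := by
            rw [eq_comm]
            calc ∑ v : V, ∑ w : V,
                  (if v ∈ phi2m E C u ∧ w ∈ NH β E u ∩ NH β E v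
                    then ((Mdeg E u v : ℝ))⁻¹ else 0)
                = ∑ v : V, (if v ∈ phi2m E C u
                    then ∑ _w ∈ NH β E u ∩ NH β E v, ((Mdeg E u v : ℝ))⁻¹ else 0) := by
                  refine Finset.sum_congr rfl fun v _ => ?_
                  by_cases hv : v ∈ phi2m E C u
                  · simp only [hv, true_and, if_true]
                    rw [Finset.sum_ite_mem, Finset.univ_inter]
                  · simp [hv]
              _ = ∑ v ∈ phi2m E C u, ∑ _w ∈ NH β E u ∩ NH β E v, ((Mdeg E u v : ℝ))⁻¹ := by
                  rw [Finset.sum_ite_mem, Finset.univ_inter]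
        _ ≤ ∑ v : V, ∑ w : V,
              ((if w ∈ NH β E u ∧ ¬ C w = C u ∧ v ∈ NH β E w
                  then ((1 - β) * (deg E w : ℝ))⁻¹ else 0)
               + (if w ∈ NH β E u ∧ v ∈ NH β E w ∧ ¬ C v = C w
                  then ((deg E u : ℝ))⁻¹ else 0)) := by
            refine Finset.sum_le_sum fun v _ => Finset.sum_le_sum fun w _ => ?_
            have hA0 : (0:ℝ) ≤ (if w ∈ NH β E u ∧ ¬ C w = C u ∧ v ∈ NH β E w
                then ((1 - β) * (deg E w : ℝ))⁻¹ else 0) := by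
              split_ifs
              · exact hMwinv w
              · exact le_rfl
            have hB0 : (0:ℝ) ≤ (if w ∈ NH β E u ∧ v ∈ NH β E w ∧ ¬ C v = C w
                then ((deg E u : ℝ))⁻¹ else 0) := by
              split_ifs
              · exact le_of_lt (inv_pos.2 (hdpos u))
              · exact le_rfl
            by_cases hT : v ∈ phi2m E C u ∧ w ∈ NH β E u ∩ NH β E v
            · rw [if_pos hT]
              obtain ⟨hv, hw⟩ := hT
              obtain ⟨hw1, hw2⟩ := Finset.mem_inter.1 hw
              have hvw : v ∈ NH β E w := my_mem_NH.2 (my_EH_symm hsymm (my_mem_NH.1 hw2))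
              simp only [phi2m, Finset.mem_filter, Finset.mem_univ, true_and] at hv
              have hMcast : (Mdeg E u v : ℝ) = max ((deg E u : ℝ)) ((deg E v : ℝ)) := by
                simp [Mdeg, Nat.cast_max]
              by_cases hCw : C w = C u
              · have hCv : ¬ C v = C w := by
                  rw [hCw]; exact fun h => hv.2.2 h.symm
                have hB : ((Mdeg E u v : ℝ))⁻¹ ≤ ((deg E u : ℝ))⁻¹ := by
                  apply inv_anti₀ (hdpos u)
                  rw [hMcast]
                  exact le_max_left _ _
                have hcondB : w ∈ NH β E u ∧ v ∈ NH β E w ∧ ¬ C v = C w := ⟨hw1, hvw, hCv⟩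
                rw [if_pos hcondB]
                linarith
              · have hA : ((Mdeg E u v : ℝ))⁻¹ ≤ ((1 - β) * (deg E w : ℝ))⁻¹ := by
                  apply inv_anti₀ (hMw w)
                  have h1 : (1 - β) * (deg E w : ℝ) ≤ (deg E v : ℝ) :=
                    my_deg_lower hβ0.le (my_mem_NH.1 hvw)
                  have h2 : (deg E v : ℝ) ≤ (Mdeg E u v : ℝ) := by
                    rw [hMcast]; exact le_max_right _ _
                  linarith
                have hcondA : w ∈ NH β E u ∧ ¬ C w = C u ∧ v ∈ NH β E w := ⟨hw1, hCw, hvw⟩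
                rw [if_pos hcondA]
                linarith
            · rw [if_neg hT]
              linarith
        _ = (∑ w : V, ∑ v : V,
              (if w ∈ NH β E u ∧ ¬ C w = C u ∧ v ∈ NH β E w
                then ((1 - β) * (deg E w : ℝ))⁻¹ else 0))
            + (∑ w : V, ∑ v : V,
              (if w ∈ NH β E u ∧ v ∈ NH β E w ∧ ¬ C v = C w
                then ((deg E u : ℝ))⁻¹ else 0)) := hsum_split _ _
        _ ≤ (1 - β)⁻¹ * (costC E C u : ℝ)
            + ∑ w ∈ NH β E u, ((deg E u : ℝ))⁻¹ * (costC E C w : ℝ) := by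
            apply add_le_add
            · -- Case A
              have hAin : ∀ w : V, ∑ v : V,
                  (if w ∈ NH β E u ∧ ¬ C w = C u ∧ v ∈ NH β E w
                    then ((1 - β) * (deg E w : ℝ))⁻¹ else 0)
                  ≤ (if w ∈ NH β E u ∧ ¬ C w = C u then (1 - β)⁻¹ else 0) := by
                intro w
                by_cases hw : w ∈ NH β E u ∧ ¬ C w = C u
                · rw [if_pos hw]
                  have he : ∀ v : V,
                      (if w ∈ NH β E u ∧ ¬ C w = C u ∧ v ∈ NH β E w
                        then ((1 - β) * (deg E w : ℝ))⁻¹ else 0)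
                      = (if v ∈ NH β E w then ((1 - β) * (deg E w : ℝ))⁻¹ else 0) := by
                    intro v
                    by_cases hv : v ∈ NH β E w
                    · rw [if_pos ⟨hw.1, hw.2, hv⟩, if_pos hv]
                    · rw [if_neg (fun h => hv h.2.2), if_neg hv]
                  rw [Finset.sum_congr rfl fun v _ => he v]
                  rw [Finset.sum_ite_mem, Finset.univ_inter, Finset.sum_const,
                    nsmul_eq_mul]
                  have h3 : ((NH β E w).card : ℝ) ≤ (deg E w : ℝ) := by
                    exact_mod_cast Finset.card_le_card (my_NH_subset_Nbr w)
                  have h4 : (deg E w : ℝ) * ((1 - β) * (deg E w : ℝ))⁻¹ = (1 - β)⁻¹ := by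
                    rw [mul_inv, mul_comm ((1 - β)⁻¹) _, ← mul_assoc,
                      mul_inv_cancel₀ (ne_of_gt (hdpos w)), one_mul]
                  calc ((NH β E w).card : ℝ) * ((1 - β) * (deg E w : ℝ))⁻¹
                      ≤ (deg E w : ℝ) * ((1 - β) * (deg E w : ℝ))⁻¹ :=
                        mul_le_mul_of_nonneg_right h3 (hMwinv w)
                    _ = (1 - β)⁻¹ := h4
                · rw [if_neg hw]
                  refine le_of_eq (Finset.sum_eq_zero fun v _ => ?_)
                  rw [if_neg (fun h => hw ⟨h.1, h.2.1⟩)]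
              calc ∑ w : V, ∑ v : V,
                    (if w ∈ NH β E u ∧ ¬ C w = C u ∧ v ∈ NH β E w
                      then ((1 - β) * (deg E w : ℝ))⁻¹ else 0)
                  ≤ ∑ w : V, (if w ∈ NH β E u ∧ ¬ C w = C u then (1 - β)⁻¹ else 0) :=
                    Finset.sum_le_sum fun w _ => hAin w
                _ = ((Finset.univ.filter (fun w => w ∈ NH β E u ∧ ¬ C w = C u)).card : ℝ)
                      * (1 - β)⁻¹ := by
                    rw [← Finset.sum_filter, Finset.sum_const, nsmul_eq_mul]
                _ ≤ (costC E C u : ℝ) * (1 - β)⁻¹ := by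
                    apply mul_le_mul_of_nonneg_right _ hbinv
                    have hsub : (Finset.univ.filter (fun w => w ∈ NH β E u ∧ ¬ C w = C u)) ⊆
                        (Finset.univ.filter
                          (fun v => (E u v ∧ C u ≠ C v) ∨ (¬ E u v ∧ v ≠ u ∧ C u = C v))) := by
                      intro w hw
                      simp only [Finset.mem_filter, Finset.mem_univ, true_and] at hw ⊢
                      exact Or.inl ⟨(my_mem_NH.1 hw.1).1, fun h => hw.2 h.symm⟩
                    exact_mod_cast Finset.card_le_card hsub
                _ = (1 - β)⁻¹ * (costC E C u : ℝ) := mul_comm _ _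
            · -- Case B
              have hBin : ∀ w : V, ∑ v : V,
                  (if w ∈ NH β E u ∧ v ∈ NH β E w ∧ ¬ C v = C w
                    then ((deg E u : ℝ))⁻¹ else 0)
                  ≤ (if w ∈ NH β E u then ((deg E u : ℝ))⁻¹ * (costC E C w : ℝ) else 0) := by
                intro w
                by_cases hw : w ∈ NH β E u
                · rw [if_pos hw]
                  have he : ∀ v : V,
                      (if w ∈ NH β E u ∧ v ∈ NH β E w ∧ ¬ C v = C w
                        then ((deg E u : ℝ))⁻¹ else 0)
                      = (if v ∈ NH β E w ∧ ¬ C v = C w then ((deg E u : ℝ))⁻¹ else 0) := by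
                    intro v
                    by_cases hv : v ∈ NH β E w ∧ ¬ C v = C w
                    · rw [if_pos ⟨hw, hv⟩, if_pos hv]
                    · rw [if_neg (fun h => hv h.2), if_neg hv]
                  rw [Finset.sum_congr rfl fun v _ => he v]
                  rw [← Finset.sum_filter, Finset.sum_const, nsmul_eq_mul]
                  rw [mul_comm (((deg E u : ℝ))⁻¹) ((costC E C w : ℝ))]
                  exact mul_le_mul_of_nonneg_right (hcut w) (le_of_lt (inv_pos.2 (hdpos u)))
                · rw [if_neg hw]
                  refine le_of_eq (Finset.sum_eq_zero fun v _ => ?_)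
                  rw [if_neg (fun h => hw h.1)]
              calc ∑ w : V, ∑ v : V,
                    (if w ∈ NH β E u ∧ v ∈ NH β E w ∧ ¬ C v = C w
                      then ((deg E u : ℝ))⁻¹ else 0)
                  ≤ ∑ w : V, (if w ∈ NH β E u
                      then ((deg E u : ℝ))⁻¹ * (costC E C w : ℝ) else 0) :=
                    Finset.sum_le_sum fun w _ => hBin w
                _ = ∑ w ∈ NH β E u, ((deg E u : ℝ))⁻¹ * (costC E C w : ℝ) := by
                    rw [Finset.sum_ite_mem, Finset.univ_inter]
    have hRHS : ∑ r : V, cf r * (costC E C r : ℝ)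
        = ∑ u ∈ U, ((1 - β)⁻¹ * (costC E C u : ℝ)
            + ∑ w ∈ NH β E u, ((deg E u : ℝ))⁻¹ * (costC E C w : ℝ)) := by
      have e1 : ∀ r : V, cf r * (costC E C r : ℝ)
          = (if r ∈ U then (1 - β)⁻¹ * (costC E C r : ℝ) else 0)
            + ∑ u ∈ U, (if r ∈ NH β E u then ((deg E u : ℝ))⁻¹ * (costC E C r : ℝ) else 0) := by
        intro r
        simp only [hcf]
        rw [add_mul, Finset.sum_mul]
        congr 1
        · split_ifs <;> simp
        · exact Finset.sum_congr rfl fun u _ => by split_ifs <;> simp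
      rw [Finset.sum_congr rfl fun r _ => e1 r, Finset.sum_add_distrib]
      rw [Finset.sum_ite_mem, Finset.univ_inter]
      rw [Finset.sum_comm]
      rw [← Finset.sum_add_distrib]
      refine Finset.sum_congr rfl fun u hu => ?_
      congr 1
      rw [Finset.sum_ite_mem, Finset.univ_inter]
    rw [hRHS]
    exact Finset.sum_le_sum key
  · -- (b)
    intro r
    have h1 : (if r ∈ U then (1 - β)⁻¹ else 0) ≤ (1 - β)⁻¹ := by
      split_ifs
      · exact le_rfl
      · exact hbinv
    have h2 : ∑ u ∈ U, (if r ∈ NH β E u then ((deg E u : ℝ))⁻¹ else 0) ≤ (1 - β)⁻¹ := by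
      calc ∑ u ∈ U, (if r ∈ NH β E u then ((deg E u : ℝ))⁻¹ else 0)
          ≤ ∑ u : V, (if r ∈ NH β E u then ((deg E u : ℝ))⁻¹ else 0) :=
            Finset.sum_le_sum_of_subset_of_nonneg (Finset.subset_univ U)
              (fun u _ _ => by
                split_ifs
                · exact le_of_lt (inv_pos.2 (hdpos u))
                · exact le_rfl)
        _ = ∑ u : V, (if u ∈ NH β E r then ((deg E u : ℝ))⁻¹ else 0) := by
            refine Finset.sum_congr rfl fun u _ => ?_
            by_cases h : u ∈ NH β E r
            · rw [if_pos (my_mem_NH.2 (my_EH_symm hsymm (my_mem_NH.1 h))), if_pos h]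
            · rw [if_neg (fun h' => h (my_mem_NH.2 (my_EH_symm hsymm (my_mem_NH.1 h')))),
                if_neg h]
        _ = ∑ u ∈ NH β E r, ((deg E u : ℝ))⁻¹ := by
            rw [Finset.sum_ite_mem, Finset.univ_inter]
        _ ≤ (1 - β)⁻¹ := hNHsum r
    have : cf r = (if r ∈ U then (1 - β)⁻¹ else 0)
        + ∑ u ∈ U, (if r ∈ NH β E u then ((deg E u : ℝ))⁻¹ else 0) := by
      simp only [hcf]
    rw [this, div_eq_mul_inv]
    linarith
  · -- (c)
    have h2 : ∑ r : V, ∑ u ∈ U, (if r ∈ NH β E u then ((deg E u : ℝ))⁻¹ else 0)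
        ≤ (k : ℝ) := by
      rw [Finset.sum_comm]
      calc ∑ u ∈ U, ∑ r : V, (if r ∈ NH β E u then ((deg E u : ℝ))⁻¹ else 0)
          = ∑ u ∈ U, ((NH β E u).card : ℝ) * ((deg E u : ℝ))⁻¹ := by
            refine Finset.sum_congr rfl fun u _ => ?_
            rw [Finset.sum_ite_mem, Finset.univ_inter, Finset.sum_const, nsmul_eq_mul]
        _ ≤ ∑ _u ∈ U, (1 : ℝ) := by
            refine Finset.sum_le_sum fun u _ => ?_
            have h3 : ((NH β E u).card : ℝ) ≤ (deg E u : ℝ) := by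
              exact_mod_cast Finset.card_le_card (my_NH_subset_Nbr u)
            rw [← mul_inv_cancel₀ (ne_of_gt (hdpos u))]
            exact mul_le_mul_of_nonneg_right h3 (le_of_lt (inv_pos.2 (hdpos u)))
        _ = (k : ℝ) := by rw [Finset.sum_const, nsmul_eq_mul, hU, mul_one]
    have hk0 : (0:ℝ) ≤ (k : ℝ) := Nat.cast_nonneg k
    have hsum : ∑ r : V, cf r
        = ((k : ℝ)) * (1 - β)⁻¹
          + ∑ r : V, ∑ u ∈ U, (if r ∈ NH β E u then ((deg E u : ℝ))⁻¹ else 0) := by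
      simp only [hcf]
      rw [Finset.sum_add_distrib, Finset.sum_ite_mem, Finset.univ_inter,
        Finset.sum_const, nsmul_eq_mul, hU]
    rw [hsum, div_eq_mul_inv]
    nlinarith [mul_inv_cancel₀ (ne_of_gt hb), inv_pos.2 hb,
      mul_nonneg hk0 (le_of_lt (inv_pos.2 hb))]


end
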